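/- Let n ≥ 1, let ρ_i be a d_i-dimensional quantum state for each i ∈ Fin n, let ϱ be the product state on K = Π i, Fin (d i), and let X be a Hermitian matrix on K with Efron–Stein decomposition X = ∑_{J ⊆ Fin n} X^{=J}. Then Re(Tr[ϱ·X²]) = ∑_{J ⊆ Fin n} Re(Tr[ϱ·(X^{=J})²]). -/

import Mathlib

open scoped BigOperators ComplexOrder

noncomputable section

/-- A `d`-dimensional quantum state: positive semidefinite with trace 1. -/
def IsState {d : ℕ} (ρ : Matrix (Fin d) (Fin d) ℂ) : Prop :=
  ρ.PosSemidef ∧ ρ.trace = 1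

/-- The product state `ρ₁ ⊗ ⋯ ⊗ ρ_n` on `K = Π i, Fin (dim i)`. -/
def prodState {n : ℕ} {dim : Fin n → ℕ}
    (ρ : ∀ i, Matrix (Fin (dim i)) (Fin (dim i)) ℂ) :
    Matrix (∀ j, Fin (dim j)) (∀ j, Fin (dim j)) ℂ :=
  fun a b => ∏ i, ρ i (a i) (b i)

/-- Marginalization of the `i`-th component: `E_i X = Tr_i[ρ_i X] ⊗ Id_i`. -/
def Emap {n : ℕ} {dim : Fin n → ℕ}
    (ρ : ∀ i, Matrix (Fin (dim i)) (Fin (dim i)) ℂ) (i : Fin n)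
    (X : Matrix (∀ j, Fin (dim j)) (∀ j, Fin (dim j)) ℂ) :
    Matrix (∀ j, Fin (dim j)) (∀ j, Fin (dim j)) ℂ :=
  fun a b =>
    if a i = b i then
      ∑ e, ∑ c, ρ i e c * X (Function.update a i c) (Function.update b i e)
    else 0

/-- The product `∏_{i ∈ S} E_i` (the maps `E_i` commute, so applying them in
increasing order of the indices realizes this product). -/
def EProd {n : ℕ} {dim : Fin n → ℕ}
    (ρ : ∀ i, Matrix (Fin (dim i)) (Fin (dim i)) ℂ) (S : Finset (Fin n))
    (X : Matrix (∀ j, Fin (dim j)) (∀ j, Fin (dim j)) ℂ) :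
    Matrix (∀ j, Fin (dim j)) (∀ j, Fin (dim j)) ℂ :=
  (S.sort (· ≤ ·)).foldr (fun i Y => Emap ρ i Y) X

/-- The Efron–Stein part `X^{=J} = ∑_{I ⊆ J} (-1)^{|J| - |I|} (∏_{i ∉ I} E_i) X`. -/
def ESpart {n : ℕ} {dim : Fin n → ℕ}
    (ρ : ∀ i, Matrix (Fin (dim i)) (Fin (dim i)) ℂ)
    (X : Matrix (∀ j, Fin (dim j)) (∀ j, Fin (dim j)) ℂ)
    (J : Finset (Fin n)) :
    Matrix (∀ j, Fin (dim j)) (∀ j, Fin (dim j)) ℂ :=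
  ∑ I ∈ J.powerset, ((-1 : ℂ) ^ (J.card - I.card)) • EProd ρ Iᶜ X


variable {n : ℕ} {dim : Fin n → ℕ} (ρ : ∀ i, Matrix (Fin (dim i)) (Fin (dim i)) ℂ)

lemma Emap_comm (i j : Fin n) (Y : Matrix (∀ j, Fin (dim j)) (∀ j, Fin (dim j)) ℂ) :
    Emap ρ i (Emap ρ j Y) = Emap ρ j (Emap ρ i Y) := by
  rcases eq_or_ne i j with rfl | hij
  · rfl
  funext a b
  by_cases h1 : a i = b i <;> by_cases h2 : a j = b j <;>
    simp only [Emap, Function.update_of_ne hij, Function.update_of_ne hij.symm, h1, h2,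
      if_true, if_false, mul_zero, Finset.sum_const_zero, if_neg, if_pos]
  · simp only [Finset.mul_sum]
    conv_lhs => enter [2, e]; rw [Finset.sum_comm]
    rw [Finset.sum_comm]
    conv_lhs => enter [2, e', 2, e]; rw [Finset.sum_comm]
    conv_lhs => enter [2, e']; rw [Finset.sum_comm]
    refine Finset.sum_congr rfl fun e' _ => Finset.sum_congr rfl fun c' _ => ?_
    refine Finset.sum_congr rfl fun e _ => Finset.sum_congr rfl fun c _ => ?_
    rw [Function.update_comm hij, Function.update_comm hij]
    ring

lemma Emap_add (i : Fin n) (A B : Matrix (∀ j, Fin (dim j)) (∀ j, Fin (dim j)) ℂ) :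
    Emap ρ i (A + B) = Emap ρ i A + Emap ρ i B := by
  funext a b
  by_cases h : a i = b i <;>
    simp [Emap, h, mul_add, Finset.sum_add_distrib]

lemma Emap_smul (i : Fin n) (c : ℂ) (A : Matrix (∀ j, Fin (dim j)) (∀ j, Fin (dim j)) ℂ) :
    Emap ρ i (c • A) = c • Emap ρ i A := by
  funext a b
  by_cases h : a i = b i <;>
    simp [Emap, h, Finset.mul_sum, mul_left_comm]

lemma Emap_sum (i : Fin n) {α : Type*} (s : Finset α)
    (f : α → Matrix (∀ j, Fin (dim j)) (∀ j, Fin (dim j)) ℂ) :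
    Emap ρ i (∑ x ∈ s, f x) = ∑ x ∈ s, Emap ρ i (f x) := by
  classical
  induction s using Finset.induction_on with
  | empty =>
    funext a b; by_cases h : a i = b i <;> simp [Emap, h]
  | insert _ _ hx ih =>
    rw [Finset.sum_insert hx, Finset.sum_insert hx, Emap_add, ih]

lemma Emap_idem (i : Fin n) (h : (ρ i).trace = 1)
    (Y : Matrix (∀ j, Fin (dim j)) (∀ j, Fin (dim j)) ℂ) :
    Emap ρ i (Emap ρ i Y) = Emap ρ i Y := by
  funext a b
  by_cases h1 : a i = b i
  · simp only [Emap, h1, if_true, Function.update_self, Function.update_idem]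
    have htr : ∑ e, ρ i e e = 1 := by
      simpa [Matrix.trace, Matrix.diag] using h
    calc ∑ e, ∑ c, ρ i e c *
          (if c = e then ∑ e', ∑ c', ρ i e' c' * Y (Function.update a i c') (Function.update b i e') else 0)
        = ∑ e, ρ i e e * ∑ e', ∑ c', ρ i e' c' * Y (Function.update a i c') (Function.update b i e') := by
          refine Finset.sum_congr rfl fun e _ => ?_
          simp [mul_ite, Finset.sum_ite_eq Finset.univ e]
      _ = _ := by rw [← Finset.sum_mul, htr, one_mul]
  · simp [Emap, h1]

lemma EProd_empty (X : Matrix (∀ j, Fin (dim j)) (∀ j, Fin (dim j)) ℂ) :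
    EProd ρ ∅ X = X := by
  simp [EProd]

lemma foldr_perm {l₁ l₂ : List (Fin n)} (h : l₁.Perm l₂)
    (X : Matrix (∀ j, Fin (dim j)) (∀ j, Fin (dim j)) ℂ) :
    l₁.foldr (fun i Y => Emap ρ i Y) X = l₂.foldr (fun i Y => Emap ρ i Y) X :=
  letI : LeftCommutative (fun i Y => Emap ρ i Y) := ⟨fun i j Y => Emap_comm ρ i j Y⟩
  h.foldr_eq X

lemma EProd_insert {i : Fin n} {S : Finset (Fin n)} (h : i ∉ S)
    (X : Matrix (∀ j, Fin (dim j)) (∀ j, Fin (dim j)) ℂ) :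
    EProd ρ (insert i S) X = Emap ρ i (EProd ρ S X) := by
  have hperm : ((insert i S).sort (· ≤ ·)).Perm (i :: S.sort (· ≤ ·)) :=
    ((insert i S).sort_perm_toList _).trans
      ((Finset.toList_insert h).trans ((S.sort_perm_toList (· ≤ ·)).symm.cons i))
  rw [EProd, foldr_perm ρ hperm]
  rfl

lemma Emap_EProd_mem {i : Fin n} {S : Finset (Fin n)} (htr : (ρ i).trace = 1) (hi : i ∈ S)
    (X : Matrix (∀ j, Fin (dim j)) (∀ j, Fin (dim j)) ℂ) :
    Emap ρ i (EProd ρ S X) = EProd ρ S X := by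
  rw [← Finset.insert_erase hi, EProd_insert ρ (Finset.notMem_erase i S),
    Emap_idem ρ i htr]

lemma Emap_ESpart_not_mem {i : Fin n} {J : Finset (Fin n)} (htr : (ρ i).trace = 1)
    (hi : i ∉ J) (X : Matrix (∀ j, Fin (dim j)) (∀ j, Fin (dim j)) ℂ) :
    Emap ρ i (ESpart ρ X J) = ESpart ρ X J := by
  rw [ESpart, Emap_sum]
  refine Finset.sum_congr rfl fun I hI => ?_
  rw [Emap_smul, Emap_EProd_mem ρ htr (Finset.mem_compl.2 fun hiI =>
    hi (Finset.mem_powerset.1 hI hiI)) X]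

lemma Emap_ESpart_mem {i : Fin n} {J : Finset (Fin n)} (htr : (ρ i).trace = 1)
    (hi : i ∈ J) (X : Matrix (∀ j, Fin (dim j)) (∀ j, Fin (dim j)) ℂ) :
    Emap ρ i (ESpart ρ X J) = 0 := by
  classical
  have hJ : J = insert i (J.erase i) := (Finset.insert_erase hi).symm
  have hie : i ∉ J.erase i := Finset.notMem_erase i J
  rw [ESpart, hJ, Finset.sum_powerset_insert hie, Emap_add, Emap_sum, Emap_sum]
  rw [← Finset.sum_add_distrib]
  rw [← Finset.sum_const_zero (s := (J.erase i).powerset) (M := Matrix _ _ ℂ)]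
  refine Finset.sum_congr rfl fun I hI => ?_
  have hiI : i ∉ I := fun h => hie (Finset.mem_powerset.1 hI h)
  have hIc : I.card ≤ (J.erase i).card := Finset.card_le_card (Finset.mem_powerset.1 hI)
  have hinsc : (insert i I).card = I.card + 1 := Finset.card_insert_of_notMem hiI
  have hiIc : i ∈ Iᶜ := Finset.mem_compl.2 hiI
  rw [Emap_smul, Emap_smul]
  rw [Emap_EProd_mem ρ htr hiIc X]
  have hcompl : insert i (insert i I)ᶜ = Iᶜ := by
    rw [Finset.compl_insert, Finset.insert_erase hiIc]
  have h2 : Emap ρ i (EProd ρ (insert i I)ᶜ X) = EProd ρ Iᶜ X := by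
    rw [← EProd_insert ρ (by simp) X, hcompl]
  rw [h2]
  rw [← add_smul]
  have hcard1 : (insert i (J.erase i)).card - I.card = ((J.erase i).card - I.card) + 1 := by
    rw [Finset.card_insert_of_notMem hie, Nat.succ_sub hIc]
  have hcard2 : (insert i (J.erase i)).card - (insert i I).card
      = (J.erase i).card - I.card := by
    rw [Finset.card_insert_of_notMem hie, hinsc, Nat.succ_sub_succ]
  rw [hcard1, hcard2, pow_succ]
  ring_nf
  simp

lemma neg_one_pow_powerset_sum (S : Finset (Fin n)) :
    (∑ K ∈ S.powerset, (-1 : ℂ) ^ K.card) = if S = ∅ then 1 else 0 := by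
  have h := Finset.sum_powerset_neg_one_pow_card (x := S)
  have : ((∑ m ∈ S.powerset, (-1 : ℤ) ^ m.card : ℤ) : ℂ)
      = ∑ K ∈ S.powerset, (-1 : ℂ) ^ K.card := by
    push_cast
    rfl
  rw [← this, h]
  split_ifs <;> simp

lemma sum_ESpart (X : Matrix (∀ j, Fin (dim j)) (∀ j, Fin (dim j)) ℂ) :
    ∑ J : Finset (Fin n), ESpart ρ X J = X := by
  classical
  have hps : ∀ J : Finset (Fin n), J.powerset
      = Finset.univ.filter (fun I => I ⊆ J) := by
    intro J; ext I; simp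
  calc ∑ J : Finset (Fin n), ESpart ρ X J
      = ∑ J : Finset (Fin n), ∑ I : Finset (Fin n),
          if I ⊆ J then ((-1 : ℂ) ^ (J.card - I.card)) • EProd ρ Iᶜ X else 0 := by
        refine Finset.sum_congr rfl fun J _ => ?_
        rw [ESpart, hps J, Finset.sum_filter]
    _ = ∑ I : Finset (Fin n),
          (∑ J : Finset (Fin n), if I ⊆ J then ((-1 : ℂ) ^ (J.card - I.card)) else 0)
            • EProd ρ Iᶜ X := by
        rw [Finset.sum_comm]
        refine Finset.sum_congr rfl fun I _ => ?_
        rw [Finset.sum_smul]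
        refine Finset.sum_congr rfl fun J _ => ?_
        split_ifs <;> simp
    _ = ∑ I : Finset (Fin n), (if I = Finset.univ then (1:ℂ) else 0) • EProd ρ Iᶜ X := by
        refine Finset.sum_congr rfl fun I _ => ?_
        congr 1
        rw [← Finset.sum_filter]
        rw [Finset.sum_nbij' (i := fun J => J \ I) (j := fun K => I ∪ K)
          (t := Iᶜ.powerset) (g := fun K => (-1 : ℂ) ^ K.card)]
        · rw [neg_one_pow_powerset_sum]
          simp [Finset.compl_eq_empty_iff]
        · intro J hJ
          simp only [Finset.mem_filter, Finset.mem_univ, true_and] at hJ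
          simp only [Finset.mem_powerset]
          intro x hx
          simp only [Finset.mem_sdiff] at hx
          exact Finset.mem_compl.2 hx.2
        · intro K hK
          simp only [Finset.mem_powerset] at hK
          simp [Finset.subset_union_left]
        · intro J hJ
          simp only [Finset.mem_filter, Finset.mem_univ, true_and] at hJ
          exact Finset.union_sdiff_of_subset hJ
        · intro K hK
          simp only [Finset.mem_powerset] at hK
          refine Finset.union_sdiff_cancel_left ?_
          exact Finset.disjoint_left.2 fun x hxI hxK =>
            (Finset.mem_compl.1 (hK hxK)) hxI
        · intro J hJ
          simp only [Finset.mem_filter, Finset.mem_univ, true_and] at hJ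
          rw [Finset.card_sdiff_of_subset hJ]
    _ = X := by
        simp only [ite_smul, zero_smul, one_smul]
        rw [Finset.sum_ite_eq' Finset.univ (Finset.univ : Finset (Fin n))
          (fun I => EProd ρ Iᶜ X)]
        simp [EProd_empty]

lemma trace_mul_mul (M A B : Matrix (∀ j, Fin (dim j)) (∀ j, Fin (dim j)) ℂ) :
    (M * (A * B)).trace = ∑ a, ∑ b, ∑ c, M a b * (A b c * B c a) := by
  simp [Matrix.trace, Matrix.mul_apply, Matrix.diag, Finset.mul_sum]

lemma prodState_update_mul (i : Fin n) (a b : ∀ j, Fin (dim j)) (e f : Fin (dim i)) :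
    prodState ρ (Function.update a i e) (Function.update b i f) * ρ i (a i) (b i)
      = prodState ρ a b * ρ i e f := by
  unfold prodState
  rw [← Finset.mul_prod_erase Finset.univ
      (fun j => ρ j (Function.update a i e j) (Function.update b i f j)) (Finset.mem_univ i),
    ← Finset.mul_prod_erase Finset.univ (fun j => ρ j (a j) (b j)) (Finset.mem_univ i)]
  have hprod : (∏ j ∈ Finset.univ.erase i,
        ρ j (Function.update a i e j) (Function.update b i f j))
      = ∏ j ∈ Finset.univ.erase i, ρ j (a j) (b j) := by
    refine Finset.prod_congr rfl fun j hj => ?_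
    have hji : j ≠ i := (Finset.mem_erase.1 hj).1
    rw [Function.update_of_ne hji, Function.update_of_ne hji]
  simp only [Function.update_self]
  rw [hprod]
  ring

lemma trace_Emap_adjoint (i : Fin n)
    (A B : Matrix (∀ j, Fin (dim j)) (∀ j, Fin (dim j)) ℂ) :
    (prodState ρ * (A * Emap ρ i B)).trace = (prodState ρ * (Emap ρ i A * B)).trace := by
  classical
  have hL : (prodState ρ * (A * Emap ρ i B)).trace
      = ∑ x ∈ Finset.univ.filter
          (fun x : (∀ j, Fin (dim j)) × (∀ j, Fin (dim j)) × (∀ j, Fin (dim j))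
              × Fin (dim i) × Fin (dim i) => x.2.2.1 i = x.1 i),
          prodState ρ x.1 x.2.1 * A x.2.1 x.2.2.1 *
            (ρ i x.2.2.2.1 x.2.2.2.2 *
              B (Function.update x.2.2.1 i x.2.2.2.2) (Function.update x.1 i x.2.2.2.1)) := by
    rw [trace_mul_mul, Finset.sum_filter]
    simp only [Fintype.sum_prod_type]
    refine Finset.sum_congr rfl fun a _ => Finset.sum_congr rfl fun b _ =>
      Finset.sum_congr rfl fun c _ => ?_
    by_cases h : c i = a i
    · simp [Emap, h, Finset.mul_sum, mul_assoc]
    · simp [Emap, h]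
  have hR : (prodState ρ * (Emap ρ i A * B)).trace
      = ∑ x ∈ Finset.univ.filter
          (fun x : (∀ j, Fin (dim j)) × (∀ j, Fin (dim j)) × (∀ j, Fin (dim j))
              × Fin (dim i) × Fin (dim i) => x.2.1 i = x.2.2.1 i),
          prodState ρ x.1 x.2.1 *
            (ρ i x.2.2.2.1 x.2.2.2.2 *
              A (Function.update x.2.1 i x.2.2.2.2) (Function.update x.2.2.1 i x.2.2.2.1)) *
            B x.2.2.1 x.1 := by
    rw [trace_mul_mul, Finset.sum_filter]
    simp only [Fintype.sum_prod_type]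
    refine Finset.sum_congr rfl fun a _ => Finset.sum_congr rfl fun b _ =>
      Finset.sum_congr rfl fun c _ => ?_
    by_cases h : b i = c i
    · simp [Emap, h, Finset.mul_sum, Finset.sum_mul, mul_assoc]
    · simp [Emap, h]
  rw [hL, hR]
  refine Finset.sum_nbij'
    (i := fun x => (Function.update x.1 i x.2.2.2.1, Function.update x.2.1 i x.2.2.2.2,
      Function.update x.2.2.1 i x.2.2.2.2, x.1 i, x.2.1 i))
    (j := fun x => (Function.update x.1 i x.2.2.2.1, Function.update x.2.1 i x.2.2.2.2,
      Function.update x.2.2.1 i x.2.2.2.1, x.1 i, x.2.1 i))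
    ?_ ?_ ?_ ?_ ?_
  · rintro ⟨a, b, c, e, f⟩ hx
    simp [Function.update_self]
  · rintro ⟨a, b, c, e, f⟩ hx
    simp [Function.update_self]
  · rintro ⟨a, b, c, e, f⟩ hx
    simp only [Finset.mem_filter, Finset.mem_univ, true_and] at hx
    have hc : Function.update c i (a i) = c := by
      rw [← hx]; exact Function.update_eq_self i c
    simp [Function.update_idem, Function.update_self, Function.update_eq_self, hc]
  · rintro ⟨a, b, c, e, f⟩ hx
    simp only [Finset.mem_filter, Finset.mem_univ, true_and] at hx
    have hc : Function.update c i (b i) = c := by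
      rw [hx]; exact Function.update_eq_self i c
    simp [Function.update_idem, Function.update_self, Function.update_eq_self, hc]
  · rintro ⟨a, b, c, e, f⟩ hx
    simp only [Finset.mem_filter, Finset.mem_univ, true_and] at hx
    simp only [Function.update_idem, Function.update_self]
    have hc : Function.update c i (a i) = c := by
      rw [← hx]; exact Function.update_eq_self i c
    rw [Function.update_eq_self i b, hc]
    have key := prodState_update_mul ρ i a b e f
    linear_combination (-(A b c * B (Function.update c i f) (Function.update a i e))) * key

lemma trace_cross_zero (htr : ∀ i, (ρ i).trace = 1) {J J' : Finset (Fin n)} (h : J ≠ J')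
    (X : Matrix (∀ j, Fin (dim j)) (∀ j, Fin (dim j)) ℂ) :
    (prodState ρ * (ESpart ρ X J * ESpart ρ X J')).trace = 0 := by
  have hsub : ¬(J ⊆ J' ∧ J' ⊆ J) := fun ⟨h1, h2⟩ => h (Finset.Subset.antisymm h1 h2)
  rcases not_and_or.1 hsub with hns | hns
  · obtain ⟨i, hiJ, hiJ'⟩ := Finset.not_subset.1 hns
    have e1 : ESpart ρ X J' = Emap ρ i (ESpart ρ X J') :=
      (Emap_ESpart_not_mem ρ (htr i) hiJ' X).symm
    rw [e1, trace_Emap_adjoint, Emap_ESpart_mem ρ (htr i) hiJ X]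
    simp
  · obtain ⟨i, hiJ', hiJ⟩ := Finset.not_subset.1 hns
    have e1 : ESpart ρ X J = Emap ρ i (ESpart ρ X J) :=
      (Emap_ESpart_not_mem ρ (htr i) hiJ X).symm
    rw [e1, ← trace_Emap_adjoint, Emap_ESpart_mem ρ (htr i) hiJ' X]
    simp


/-- Parseval for the quantum Efron–Stein decomposition. -/
theorem quantum_efron_stein_parseval (n : ℕ) (hn : 1 ≤ n) (dim : Fin n → ℕ)
    (ρ : ∀ i, Matrix (Fin (dim i)) (Fin (dim i)) ℂ)
    (hρ : ∀ i, IsState (ρ i))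
    (X : Matrix (∀ j, Fin (dim j)) (∀ j, Fin (dim j)) ℂ) (hX : X.IsHermitian) :
    ((prodState ρ * (X * X)).trace).re =
      ∑ J : Finset (Fin n),
        ((prodState ρ * (ESpart ρ X J * ESpart ρ X J)).trace).re := by
  have htr : ∀ i, (ρ i).trace = 1 := fun i => (hρ i).2
  have hdec : ∑ J : Finset (Fin n), ESpart ρ X J = X := sum_ESpart ρ X
  have key : (prodState ρ * (X * X)).trace
      = ∑ J : Finset (Fin n), (prodState ρ * (ESpart ρ X J * ESpart ρ X J)).trace := by
    calc (prodState ρ * (X * X)).trace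
        = ∑ J : Finset (Fin n), ∑ J' : Finset (Fin n),
            (prodState ρ * (ESpart ρ X J * ESpart ρ X J')).trace := by
          conv_lhs => rw [← hdec]
          simp only [Finset.sum_mul, Finset.mul_sum, Matrix.trace_sum]
          rw [Finset.sum_comm]
      _ = ∑ J : Finset (Fin n), (prodState ρ * (ESpart ρ X J * ESpart ρ X J)).trace := by
          refine Finset.sum_congr rfl fun J _ => ?_
          refine Finset.sum_eq_single_of_mem J (Finset.mem_univ J) fun J' _ hne => ?_
          exact trace_cross_zero ρ htr (fun hEq => hne (hEq.symm)) X
  rw [key]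
  exact Complex.re_sum Finset.univ _
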